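/- Corollary: Under the hypotheses of the main theorem (a, b ∈ A_{k₁,…,k_n} with #γ_ℓ(a) = #γ_ℓ(b) for all ℓ), the Hausdorff dimensions of K_a and K_b coincide. -/

import Mathlib

/-- Conditions (I), (II), (III) for a translation vector `a` (indexed `1,…,m`) to belong
to the class `𝔸_{k₁,…,k_n}`, for the homogeneous IFS `{x ↦ l·x + a i}` with ratio `l`. -/
def MemClassA (l : ℝ) (m n : ℕ) (k : ℕ → ℕ) (a : ℕ → ℝ) : Prop :=
  -- (I)
  (a 1 = 0 ∧ a m = 1 - l ∧ StrictMonoOn a (Set.Icc 1 m)) ∧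
  -- (II): no three of the intervals `f i [0,1] = [a i, a i + l]` intersect
  (∀ i j t, i ∈ Set.Icc 1 m → j ∈ Set.Icc 1 m → t ∈ Set.Icc 1 m →
    i ≠ j → j ≠ t → i ≠ t →
    Set.Icc (a i) (a i + l) ∩ Set.Icc (a j) (a j + l) ∩ Set.Icc (a t) (a t + l) = ∅) ∧
  -- (II): nonempty pairwise intersections have length `l ^ k ℓ` for some `1 ≤ ℓ ≤ n`
  (∀ i j, i ∈ Set.Icc 1 m → j ∈ Set.Icc 1 m → i < j →
    (Set.Icc (a i) (a i + l) ∩ Set.Icc (a j) (a j + l)).Nonempty →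
    ∃ ℓ ∈ Set.Icc 1 n, a i + l - a j = l ^ k ℓ) ∧
  -- (III)
  ((∀ j, 1 < j → j ≤ m → Set.Icc (a 1) (a 1 + l) ∩ Set.Icc (a j) (a j + l) = ∅) ∨
   (∀ j, 1 ≤ j → j < m → Set.Icc (a m) (a m + l) ∩ Set.Icc (a j) (a j + l) = ∅))

/-- `γ ℓ (a)`: indices `i` such that `f i [0,1]` and `f (i+1) [0,1]` overlap in an
interval of length `l ^ k ℓ`. -/
def gammaSet (l : ℝ) (m : ℕ) (k : ℕ → ℕ) (a : ℕ → ℝ) (ℓ : ℕ) : Set ℕ :=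
  {i | i ∈ Set.Icc 1 (m - 1) ∧ a i + l - a (i + 1) = l ^ k ℓ}

namespace DimHCorAux

open scoped Classical

noncomputable section

/-- The value of the symbolic coding `ω` under the IFS `{x ↦ l x + a i}`. -/
def piS (l : ℝ) (a : ℕ → ℝ) (ω : ℕ → ℕ) : ℝ := ∑' j : ℕ, a (ω j) * l ^ j

/-- A word with letters in `{1, …, m}`. -/
def Valid (m : ℕ) (ω : ℕ → ℕ) : Prop := ∀ j, 1 ≤ ω j ∧ ω j ≤ m

/-- A word avoiding all the "overlap patterns" `(i+1) 1^(k ℓ - 1)`, `i ∈ γ_ℓ(a)`. -/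
def Canon (l : ℝ) (m n : ℕ) (k : ℕ → ℕ) (a : ℕ → ℝ) (ω : ℕ → ℕ) : Prop :=
  ∀ p ℓ i, ℓ ∈ Set.Icc 1 n → i ∈ gammaSet l m k a ℓ → ω p = i + 1 →
    ∃ s, s < k ℓ - 1 ∧ ω (p + 1 + s) ≠ 1

/-- Distilled structural hypotheses on the translation vector. -/
structure Tame (l : ℝ) (m n : ℕ) (k : ℕ → ℕ) (a : ℕ → ℝ) : Prop where
  h1 : a 1 = 0
  hmtop : a m = 1 - l
  mono : StrictMonoOn a (Set.Icc 1 m)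
  adj : ∀ i, 1 ≤ i → i + 1 ≤ m →
      l < a (i + 1) - a i ∨ ∃ ℓ, ℓ ∈ Set.Icc 1 n ∧ a i + l - a (i + 1) = l ^ k ℓ
  a2 : l < a 2

section Series

variable {l : ℝ} {m : ℕ} {a : ℕ → ℝ} {ω τ : ℕ → ℕ}

lemma Tame.bounds {n : ℕ} {k : ℕ → ℕ} (ht : Tame l m n k a) (hm : 3 ≤ m) :
    ∀ i, 1 ≤ i → i ≤ m → 0 ≤ a i ∧ a i ≤ 1 - l := by
  intro i h1 h2
  constructor
  · rw [← ht.h1]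
    exact ht.mono.monotoneOn (by simp [Set.mem_Icc]; omega) (by simp [Set.mem_Icc]; omega) h1
  · rw [← ht.hmtop]
    exact ht.mono.monotoneOn (by simp [Set.mem_Icc]; omega) (by simp [Set.mem_Icc]; omega) h2

lemma summable_code (hl0 : 0 < l) (hl1 : l < 1)
    (ha : ∀ i, 1 ≤ i → i ≤ m → 0 ≤ a i ∧ a i ≤ 1 - l) (hω : Valid m ω) :
    Summable (fun j => a (ω j) * l ^ j) := by
  apply Summable.of_nonneg_of_le
    (fun j => mul_nonneg ((ha _ (hω j).1 (hω j).2).1) (by positivity))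
    (fun j => ?_) (summable_geometric_of_lt_one hl0.le hl1)
  have h1 := (ha _ (hω j).1 (hω j).2).2
  have h2 : (0:ℝ) < l ^ j := pow_pos hl0 j
  nlinarith

lemma piS_mem (hl0 : 0 < l) (hl1 : l < 1)
    (ha : ∀ i, 1 ≤ i → i ≤ m → 0 ≤ a i ∧ a i ≤ 1 - l) (hω : Valid m ω) :
    0 ≤ piS l a ω ∧ piS l a ω ≤ 1 := by
  have hsum := summable_code hl0 hl1 ha hω
  constructor
  · exact tsum_nonneg fun j => mul_nonneg ((ha _ (hω j).1 (hω j).2).1) (by positivity)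
  · have h2 : ∀ j, a (ω j) * l ^ j ≤ (1 - l) * l ^ j := by
      intro j
      have h1 := (ha _ (hω j).1 (hω j).2).2
      have h2 : (0:ℝ) ≤ l ^ j := pow_nonneg hl0.le j
      nlinarith
    calc piS l a ω ≤ ∑' j : ℕ, (1 - l) * l ^ j :=
          Summable.tsum_le_tsum h2 hsum ((summable_geometric_of_lt_one hl0.le hl1).mul_left _)
      _ = (1 - l) * (1 - l)⁻¹ := by
          rw [tsum_mul_left, tsum_geometric_of_lt_one hl0.le hl1]
      _ = 1 := by
          have : (1:ℝ) - l ≠ 0 := by linarith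
          field_simp

lemma piS_rec (hl0 : 0 < l) (hl1 : l < 1)
    (ha : ∀ i, 1 ≤ i → i ≤ m → 0 ≤ a i ∧ a i ≤ 1 - l) (hω : Valid m ω) :
    piS l a ω = a (ω 0) + l * piS l a (fun j => ω (j + 1)) := by
  have hsum := summable_code hl0 hl1 ha hω
  rw [piS, Summable.tsum_eq_zero_add hsum, pow_zero, mul_one]
  congr 1
  rw [piS, ← tsum_mul_left]
  exact tsum_congr fun j => by ring

lemma piS_prefix (hl0 : 0 < l) (hl1 : l < 1)
    (ha : ∀ i, 1 ≤ i → i ≤ m → 0 ≤ a i ∧ a i ≤ 1 - l) (p : ℕ) :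
    ∀ ω τ, Valid m ω → Valid m τ → (∀ q, q < p → ω q = τ q) →
      |piS l a ω - piS l a τ| ≤ l ^ p := by
  induction p with
  | zero =>
    intro ω τ hω hτ _
    have h1 := piS_mem hl0 hl1 ha hω
    have h2 := piS_mem hl0 hl1 ha hτ
    rw [pow_zero, abs_le]
    constructor <;> linarith [h1.1, h1.2, h2.1, h2.2]
  | succ p ih =>
    intro ω τ hω hτ hag
    have h0 : ω 0 = τ 0 := hag 0 (Nat.succ_pos p)
    have hsω : Valid m (fun j => ω (j + 1)) := fun j => hω (j + 1)
    have hsτ : Valid m (fun j => τ (j + 1)) := fun j => hτ (j + 1)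
    rw [piS_rec hl0 hl1 ha hω, piS_rec hl0 hl1 ha hτ, h0]
    have heq : a (τ 0) + l * piS l a (fun j => ω (j + 1)) -
        (a (τ 0) + l * piS l a (fun j => τ (j + 1))) =
        l * (piS l a (fun j => ω (j + 1)) - piS l a (fun j => τ (j + 1))) := by ring
    rw [heq, abs_mul, abs_of_pos hl0]
    have hih := ih (fun j => ω (j + 1)) (fun j => τ (j + 1)) hsω hsτ
      (fun q hq => hag (q + 1) (by omega))
    calc l * |piS l a (fun j => ω (j + 1)) - piS l a (fun j => τ (j + 1))| ≤ l * l ^ p := by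
          exact mul_le_mul_of_nonneg_left hih hl0.le
      _ = l ^ (p + 1) := by ring

lemma piS_eq_of_partial (hl0 : 0 < l) (hl1 : l < 1)
    (ha : ∀ i, 1 ≤ i → i ≤ m → 0 ≤ a i ∧ a i ≤ 1 - l) (hω : Valid m ω)
    {x : ℝ} (y : ℕ → ℝ) (R : ℝ) (hy : ∀ N, |y N| ≤ R)
    (hx : ∀ N, x = (∑ j ∈ Finset.range N, a (ω j) * l ^ j) + l ^ N * y N) :
    piS l a ω = x := by
  have hsum := summable_code hl0 hl1 ha hω
  have h1 : Filter.Tendsto (fun N => ∑ j ∈ Finset.range N, a (ω j) * l ^ j)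
      Filter.atTop (nhds (piS l a ω)) := hsum.hasSum.tendsto_sum_nat
  have h2 : Filter.Tendsto (fun N => l ^ N * y N) Filter.atTop (nhds 0) := by
    refine squeeze_zero_norm (fun N => ?_)
      (by simpa using (tendsto_pow_atTop_nhds_zero_of_lt_one hl0.le hl1).const_mul R)
    rw [norm_mul, norm_pow, Real.norm_eq_abs, Real.norm_eq_abs, abs_of_pos hl0]
    calc l ^ N * |y N| ≤ l ^ N * R := by
          exact mul_le_mul_of_nonneg_left (hy N) (by positivity)
      _ = R * l ^ N := by ring
  have h3 := h1.add h2
  rw [add_zero] at h3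
  have h4 : (fun N => (∑ j ∈ Finset.range N, a (ω j) * l ^ j) + l ^ N * y N)
      = fun _ => x := funext fun N => (hx N).symm
  rw [h4] at h3
  exact tendsto_nhds_unique h3 tendsto_const_nhds

end Series

section Attractor

variable {l : ℝ} {m : ℕ} {a : ℕ → ℝ} {Ka : Set ℝ} {ω τ : ℕ → ℕ} {x : ℝ}

lemma map_mem_Ka (hKa : Ka = ⋃ i ∈ Set.Icc 1 m, (fun x => l * x + a i) '' Ka)
    {i : ℕ} (h1 : 1 ≤ i) (h2 : i ≤ m) {z : ℝ} (hz : z ∈ Ka) : l * z + a i ∈ Ka := by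
  rw [hKa]
  exact Set.mem_biUnion (Set.mem_Icc.2 ⟨h1, h2⟩) ⟨z, hz, rfl⟩

lemma partial_mem_Ka (hKa : Ka = ⋃ i ∈ Set.Icc 1 m, (fun x => l * x + a i) '' Ka)
    (hω : Valid m ω) :
    ∀ N, ∀ z ∈ Ka, (∑ j ∈ Finset.range N, a (ω j) * l ^ j) + l ^ N * z ∈ Ka := by
  intro N
  induction N with
  | zero => intro z hz; simpa using hz
  | succ N ih =>
    intro z hz
    have h1 : (∑ j ∈ Finset.range (N + 1), a (ω j) * l ^ j) + l ^ (N + 1) * z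
        = (∑ j ∈ Finset.range N, a (ω j) * l ^ j) + l ^ N * (l * z + a (ω N)) := by
      rw [Finset.sum_range_succ]; ring
    rw [h1]
    exact ih _ (map_mem_Ka hKa (hω N).1 (hω N).2 hz)

lemma bound_Ka (hKac : IsCompact Ka) : ∃ R, ∀ w ∈ Ka, |w| ≤ R := by
  obtain ⟨R, hR⟩ := hKac.isBounded.subset_closedBall 0
  exact ⟨R, fun w hw => by simpa [Real.dist_eq] using hR hw⟩

lemma piS_mem_Ka (hl0 : 0 < l) (hl1 : l < 1)
    (ha : ∀ i, 1 ≤ i → i ≤ m → 0 ≤ a i ∧ a i ≤ 1 - l)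
    (hKane : Ka.Nonempty) (hKac : IsCompact Ka)
    (hKa : Ka = ⋃ i ∈ Set.Icc 1 m, (fun x => l * x + a i) '' Ka)
    (hω : Valid m ω) : piS l a ω ∈ Ka := by
  obtain ⟨z, hz⟩ := hKane
  have h1 : Filter.Tendsto (fun N => (∑ j ∈ Finset.range N, a (ω j) * l ^ j) + l ^ N * z)
      Filter.atTop (nhds (piS l a ω)) := by
    have hs := (summable_code hl0 hl1 ha hω).hasSum.tendsto_sum_nat
    have h2 : Filter.Tendsto (fun N => l ^ N * z) Filter.atTop (nhds 0) := by
      simpa using ((tendsto_pow_atTop_nhds_zero_of_lt_one hl0.le hl1).mul_const z)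
    simpa [piS] using hs.add h2
  exact hKac.isClosed.mem_of_tendsto h1
    (Filter.Eventually.of_forall fun N => partial_mem_Ka hKa hω N z hz)

lemma exists_code (hl0 : 0 < l) (hl1 : l < 1)
    (ha : ∀ i, 1 ≤ i → i ≤ m → 0 ≤ a i ∧ a i ≤ 1 - l)
    (hKac : IsCompact Ka)
    (hKa : Ka = ⋃ i ∈ Set.Icc 1 m, (fun x => l * x + a i) '' Ka)
    (hx : x ∈ Ka) : ∃ ω, Valid m ω ∧ piS l a ω = x := by
  have hstep : ∀ z : ℝ, z ∈ Ka →
      ∃ p : ℕ × ℝ, (1 ≤ p.1 ∧ p.1 ≤ m) ∧ p.2 ∈ Ka ∧ z = l * p.2 + a p.1 := by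
    intro z hz
    rw [hKa] at hz
    simp only [Set.mem_iUnion, Set.mem_image, Set.mem_Icc] at hz
    obtain ⟨i, hi, w, hw, hwz⟩ := hz
    exact ⟨(i, w), hi, hw, hwz.symm⟩
  choose F hF1 hF2 hF3 using hstep
  let seq : ℕ → {z : ℝ // z ∈ Ka} :=
    fun N => Nat.rec ⟨x, hx⟩ (fun _ p => ⟨(F p.1 p.2).2, hF2 p.1 p.2⟩) N
  let ω : ℕ → ℕ := fun j => (F (seq j).1 (seq j).2).1
  have hseq : ∀ j, (seq j).1 = l * (seq (j + 1)).1 + a (ω j) :=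
    fun j => hF3 (seq j).1 (seq j).2
  have hω : Valid m ω := fun j => hF1 (seq j).1 (seq j).2
  have hpart : ∀ N, x = (∑ j ∈ Finset.range N, a (ω j) * l ^ j) + l ^ N * (seq N).1 := by
    intro N
    induction N with
    | zero => simp [seq]
    | succ N ih =>
      rw [ih, hseq N, Finset.sum_range_succ]; ring
  obtain ⟨R, hR⟩ := bound_Ka hKac
  exact ⟨ω, hω, piS_eq_of_partial hl0 hl1 ha hω (fun N => (seq N).1) R
    (fun N => hR _ (seq N).2) hpart⟩

end Attractor

/-- least possible first letter of a coding of `x`. -/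
def minFirst (l : ℝ) (m : ℕ) (a : ℕ → ℝ) (x : ℝ) : ℕ :=
  sInf {i | ∃ ω, Valid m ω ∧ piS l a ω = x ∧ ω 0 = i}

/-- the point coded by the tail of the lexicographically minimal coding. -/
def nxt (l : ℝ) (m : ℕ) (a : ℕ → ℝ) (x : ℝ) : ℝ := (x - a (minFirst l m a x)) / l

/-- the lexicographically minimal coding of `x`. -/
def canon (l : ℝ) (m : ℕ) (a : ℕ → ℝ) (x : ℝ) : ℕ → ℕ :=
  fun j => minFirst l m a ((nxt l m a)^[j] x)

section Canon

variable {l : ℝ} {m : ℕ} {a : ℕ → ℝ} {Ka : Set ℝ} {ω τ : ℕ → ℕ} {x : ℝ}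

variable (hl0 : 0 < l) (hl1 : l < 1)
  (ha : ∀ i, 1 ≤ i → i ≤ m → 0 ≤ a i ∧ a i ≤ 1 - l)
  (hKane : Ka.Nonempty) (hKac : IsCompact Ka)
  (hKa : Ka = ⋃ i ∈ Set.Icc 1 m, (fun x => l * x + a i) '' Ka)

include hl0 hl1 ha hKane hKac hKa

omit hKane in
lemma minFirst_spec (hx : x ∈ Ka) :
    ∃ τ, Valid m τ ∧ piS l a τ = x ∧ τ 0 = minFirst l m a x := by
  obtain ⟨ω, hω, hπ⟩ := exists_code hl0 hl1 ha hKac hKa hx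
  exact Nat.sInf_mem (⟨ω 0, ω, hω, hπ, rfl⟩ :
    {i | ∃ τ, Valid m τ ∧ piS l a τ = x ∧ τ 0 = i}.Nonempty)

omit hl0 hl1 ha hKane hKac hKa in
lemma minFirst_min (hτ : Valid m τ) (hπ : piS l a τ = x) : minFirst l m a x ≤ τ 0 :=
  Nat.sInf_le ⟨τ, hτ, hπ, rfl⟩

omit hKane in
lemma minFirst_bounds (hx : x ∈ Ka) :
    1 ≤ minFirst l m a x ∧ minFirst l m a x ≤ m := by
  obtain ⟨τ, hτ, -, h0⟩ := minFirst_spec hl0 hl1 ha hKac hKa hx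
  rw [← h0]; exact hτ 0

omit hKane hKac hKa in
lemma shift_code (hτ : Valid m τ) (hπ : piS l a τ = x) (h0 : τ 0 = minFirst l m a x) :
    piS l a (fun j => τ (j + 1)) = nxt l m a x := by
  have hrec := piS_rec hl0 hl1 ha hτ
  rw [nxt, ← h0, eq_div_iff (ne_of_gt hl0), ← hπ, hrec]
  ring

lemma nxt_mem (hx : x ∈ Ka) : nxt l m a x ∈ Ka := by
  obtain ⟨τ, hτ, hπ, h0⟩ := minFirst_spec hl0 hl1 ha hKac hKa hx
  have hσ : Valid m (fun j => τ (j + 1)) := fun j => hτ (j + 1)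
  rw [← shift_code hl0 hl1 ha hτ hπ h0]
  exact piS_mem_Ka hl0 hl1 ha hKane hKac hKa hσ

lemma iter_mem (hx : x ∈ Ka) : ∀ N, (nxt l m a)^[N] x ∈ Ka := by
  intro N
  induction N with
  | zero => simpa using hx
  | succ N ih =>
    rw [Function.iterate_succ_apply']
    exact nxt_mem hl0 hl1 ha hKane hKac hKa ih

lemma canon_valid (hx : x ∈ Ka) : Valid m (canon l m a x) :=
  fun j => minFirst_bounds hl0 hl1 ha hKac hKa
    (iter_mem hl0 hl1 ha hKane hKac hKa hx j)

omit hl0 hl1 ha hKane hKac hKa in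
lemma canon_succ : ∀ j, canon l m a x (j + 1) = canon l m a (nxt l m a x) j := by
  intro j
  simp [canon, Function.iterate_succ_apply]

lemma canon_code (hx : x ∈ Ka) : piS l a (canon l m a x) = x := by
  have hnxt_eq : ∀ y : ℝ, y = l * nxt l m a y + a (minFirst l m a y) := by
    intro y
    rw [nxt]
    field_simp
    ring
  have hpart : ∀ N, x = (∑ j ∈ Finset.range N, a (canon l m a x j) * l ^ j)
      + l ^ N * (nxt l m a)^[N] x := by
    intro N
    induction N with
    | zero => simp
    | succ N ih =>
      have h2 : (nxt l m a)^[N] x = l * (nxt l m a)^[N+1] x + a (canon l m a x N) := by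
        rw [Function.iterate_succ_apply']
        exact hnxt_eq _
      calc x = (∑ j ∈ Finset.range N, a (canon l m a x j) * l ^ j)
            + l ^ N * (nxt l m a)^[N] x := ih
        _ = (∑ j ∈ Finset.range (N + 1), a (canon l m a x j) * l ^ j)
            + l ^ (N + 1) * (nxt l m a)^[N + 1] x := by
            rw [h2, Finset.sum_range_succ]; ring
  obtain ⟨R, hR⟩ := bound_Ka hKac
  exact piS_eq_of_partial hl0 hl1 ha (canon_valid hl0 hl1 ha hKane hKac hKa hx)
    (fun N => (nxt l m a)^[N] x) R
    (fun N => hR _ (iter_mem hl0 hl1 ha hKane hKac hKa hx N)) hpart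

lemma canon_min : ∀ p : ℕ, ∀ x ∈ Ka, ∀ τ, Valid m τ → piS l a τ = x →
    (∀ q, q < p → τ q = canon l m a x q) → canon l m a x p ≤ τ p := by
  intro p
  induction p with
  | zero =>
    intro x hx τ hτ hπ _
    exact minFirst_min hτ hπ
  | succ p ih =>
    intro x hx τ hτ hπ hag
    have h0 : τ 0 = canon l m a x 0 := hag 0 (Nat.succ_pos p)
    have hσ : Valid m (fun j => τ (j + 1)) := fun j => hτ (j + 1)
    have hσπ : piS l a (fun j => τ (j + 1)) = nxt l m a x :=
      shift_code hl0 hl1 ha hτ hπ h0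
    have hagσ : ∀ q, q < p → (fun j => τ (j + 1)) q = canon l m a (nxt l m a x) q := by
      intro q hq
      have := hag (q + 1) (by omega)
      rw [← canon_succ]
      exact this
    have := ih (nxt l m a x) (nxt_mem hl0 hl1 ha hKane hKac hKa hx)
      (fun j => τ (j + 1)) hσ hσπ hagσ
    rw [canon_succ]
    exact this

end Canon

section Rewrite

variable {l : ℝ} {m n : ℕ} {k : ℕ → ℕ} {a : ℕ → ℝ} {Ka : Set ℝ} {ω τ : ℕ → ℕ} {x : ℝ}

lemma rewrite_code (hl0 : 0 < l) (hl1 : l < 1)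
    (ha : ∀ i, 1 ≤ i → i ≤ m → 0 ≤ a i ∧ a i ≤ 1 - l)
    (h1 : a 1 = 0) (hmtop : a m = 1 - l) (hm1 : 1 ≤ m)
    (hω : Valid m ω) {p ℓ i : ℕ} (hkℓ : 2 ≤ k ℓ)
    (hγi : i ∈ gammaSet l m k a ℓ) (hp : ω p = i + 1)
    (hones : ∀ s, s < k ℓ - 1 → ω (p + 1 + s) = 1) :
    ∃ ω', Valid m ω' ∧ piS l a ω' = piS l a ω ∧ (∀ q, q < p → ω' q = ω q) ∧ ω' p = i := by
  obtain ⟨hiIcc, hieq⟩ := hγi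
  have hi1 : 1 ≤ i := (Set.mem_Icc.1 hiIcc).1
  have him : i ≤ m - 1 := (Set.mem_Icc.1 hiIcc).2
  have him' : i + 1 ≤ m := by omega
  set K : ℕ := k ℓ with hK
  set ω' : ℕ → ℕ := fun j => if j = p then i else if p < j ∧ j < p + K then m else ω j with hω'
  have hv' : Valid m ω' := by
    intro j
    simp only [hω']
    split
    · omega
    · split
      · omega
      · exact hω j
  have hagree : ∀ q, q < p → ω' q = ω q := by
    intro q hq
    simp only [hω']
    rw [if_neg (by omega), if_neg (by omega)]
  have hp' : ω' p = i := by simp [hω']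
  refine ⟨ω', hv', ?_, hagree, hp'⟩
  have hsum := summable_code hl0 hl1 ha hω
  have hsum' := summable_code hl0 hl1 ha hv'
  have hts : ∑' j, (a (ω j) * l ^ j - a (ω' j) * l ^ j) = piS l a ω - piS l a ω' :=
    Summable.tsum_sub hsum hsum'
  have hz : ∀ j ∉ Finset.Ico p (p + K), a (ω j) * l ^ j - a (ω' j) * l ^ j = 0 := by
    intro j hj
    rw [Finset.mem_Ico] at hj
    push_neg at hj
    have : ω' j = ω j := by
      simp only [hω']
      rw [if_neg (by omega), if_neg (by omega)]
    rw [this]; ring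
  have hfin : ∑' j, (a (ω j) * l ^ j - a (ω' j) * l ^ j)
      = ∑ j ∈ Finset.Ico p (p + K), (a (ω j) * l ^ j - a (ω' j) * l ^ j) := tsum_eq_sum hz
  have hsplit : ∑ j ∈ Finset.Ico p (p + K), (a (ω j) * l ^ j - a (ω' j) * l ^ j)
      = (a (ω p) * l ^ p - a (ω' p) * l ^ p)
        + ∑ j ∈ Finset.Ico (p + 1) (p + K), (a (ω j) * l ^ j - a (ω' j) * l ^ j) :=
    Finset.sum_eq_sum_Ico_succ_bot (by omega) _
  have hterm : ∀ j ∈ Finset.Ico (p + 1) (p + K),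
      a (ω j) * l ^ j - a (ω' j) * l ^ j = -((1 - l) * l ^ j) := by
    intro j hj
    rw [Finset.mem_Ico] at hj
    have hω'j : ω' j = m := by
      simp only [hω']
      rw [if_neg (by omega), if_pos ⟨by omega, hj.2⟩]
    have hωj : ω j = 1 := by
      have h2 := hones (j - p - 1) (by omega)
      have h3 : p + 1 + (j - p - 1) = j := by omega
      rwa [h3] at h2
    rw [hω'j, hωj, h1, hmtop]; ring
  have hgeom : ∑ j ∈ Finset.Ico (p + 1) (p + K), (-((1 - l) * l ^ j))
      = -((1 - l) * ((l ^ (p + K) - l ^ (p + 1)) / (l - 1))) := by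
    rw [Finset.sum_neg_distrib, ← Finset.mul_sum, geom_sum_Ico (by linarith) (by omega)]
  have hωp : ω' p = i := hp'
  have key : piS l a ω - piS l a ω' = 0 := by
    rw [← hts, hfin, hsplit, Finset.sum_congr rfl hterm, hgeom, hp, hωp]
    have hai : a (i + 1) = a i + l - l ^ K := by linarith [hieq]
    rw [hai]
    have hl1' : l - 1 ≠ 0 := by linarith
    have hpK : l ^ (p + K) = l ^ p * l ^ K := pow_add l p K
    have hp1 : l ^ (p + 1) = l ^ p * l := pow_add l p 1 ▸ by ring_nf
    rw [hpK]
    field_simp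
    ring
  linarith [key]

end Rewrite

section CanonCanonical

variable {l : ℝ} {m n : ℕ} {k : ℕ → ℕ} {a : ℕ → ℝ} {Ka : Set ℝ} {ω τ : ℕ → ℕ} {x : ℝ}

lemma canon_canonical (hl0 : 0 < l) (hl1 : l < 1) (hm : 3 ≤ m)
    (ha : ∀ i, 1 ≤ i → i ≤ m → 0 ≤ a i ∧ a i ≤ 1 - l)
    (h1 : a 1 = 0) (hmtop : a m = 1 - l)
    (hka : ∀ ℓ, ℓ ∈ Set.Icc 1 n → 2 ≤ k ℓ)
    (hKane : Ka.Nonempty) (hKac : IsCompact Ka)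
    (hKa : Ka = ⋃ i ∈ Set.Icc 1 m, (fun x => l * x + a i) '' Ka)
    (hx : x ∈ Ka) : Canon l m n k a (canon l m a x) := by
  intro p ℓ i hℓ hγi hp
  by_contra hcon
  push_neg at hcon
  obtain ⟨ω', hv', hπ', hag', hp'⟩ := rewrite_code hl0 hl1 ha h1 hmtop (by omega)
    (canon_valid hl0 hl1 ha hKane hKac hKa hx) (hka ℓ hℓ) hγi hp hcon
  have hcode' : piS l a ω' = x := by
    rw [hπ', canon_code hl0 hl1 ha hKane hKac hKa hx]
  have hle := canon_min hl0 hl1 ha hKane hKac hKa p x hx ω' hv' hcode' hag'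
  omega

end CanonCanonical

section Separation

variable {l : ℝ} {m n : ℕ} {k : ℕ → ℕ} {a : ℕ → ℝ} {ω τ : ℕ → ℕ}

lemma shift_valid (hω : Valid m ω) : Valid m (fun j => ω (j + 1)) := fun j => hω (j + 1)

lemma shift_canon (hc : Canon l m n k a ω) : Canon l m n k a (fun j => ω (j + 1)) := by
  intro p ℓ i hℓ hγi hp
  obtain ⟨s, hs, hne⟩ := hc (p + 1) ℓ i hℓ hγi hp
  refine ⟨s, hs, ?_⟩
  show ω (p + 1 + s + 1) ≠ 1
  have h4 : p + 1 + s + 1 = p + 1 + 1 + s := by omega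
  rw [h4]; exact hne

lemma separation (hl0 : 0 < l) (hl1 : l < 1) (hm : 3 ≤ m)
    (ht : Tame l m n k a)
    (hka : ∀ ℓ, ℓ ∈ Set.Icc 1 n → 2 ≤ k ℓ ∧ k ℓ ≤ k 1) :
    ∃ c : ℝ, 0 < c ∧ ∀ p : ℕ, ∀ ω τ : ℕ → ℕ, Valid m ω → Valid m τ →
      Canon l m n k a ω → Canon l m n k a τ →
      (∀ q, q < p → ω q = τ q) → ω p ≠ τ p →
      c * l ^ p ≤ |piS l a ω - piS l a τ| := by
  have ha := ht.bounds hm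
  have hhalf : 2 * l < 1 := by
    have h2mem : (2:ℕ) ∈ Set.Icc 1 m := Set.mem_Icc.2 ⟨by omega, by omega⟩
    have hmmem : m ∈ Set.Icc 1 m := Set.mem_Icc.2 ⟨by omega, le_refl m⟩
    have h2m : a 2 ≤ a m := ht.mono.monotoneOn h2mem hmmem (by omega)
    have h3 := ht.a2
    rw [ht.hmtop] at h2m
    linarith
  set g : ℕ → ℝ := fun i => if l < a (i + 1) - a i then a (i + 1) - a i - l else 1 with hg
  have hne : ((Finset.Icc 1 (m - 1)).image g).Nonempty :=
    ((Finset.nonempty_Icc).2 (by omega)).image g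
  set c : ℝ := min (min (l * (1 - 2 * l)) (l ^ (k 1 - 1) * (a 2 - l)))
      (((Finset.Icc 1 (m - 1)).image g).min' hne) with hc
  have hcpos : 0 < c := by
    refine lt_min (lt_min ?_ ?_) ?_
    · have : 0 < 1 - 2 * l := by linarith
      positivity
    · have h3 : 0 < a 2 - l := by linarith [ht.a2]
      positivity
    · rw [Finset.lt_min'_iff]
      intro y hy
      obtain ⟨i, hi, rfl⟩ := Finset.mem_image.1 hy
      simp only [hg]
      split_ifs with hcond
      · linarith
      · norm_num
  refine ⟨c, hcpos, ?_⟩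
  intro p
  induction p with
  | zero =>
    have key : ∀ ω τ : ℕ → ℕ, Valid m ω → Valid m τ → Canon l m n k a ω →
        Canon l m n k a τ → ω 0 < τ 0 → c ≤ piS l a τ - piS l a ω := by
      intro ω τ hvω hvτ hcω hcτ hlt
      have hi := hvω 0
      have hj := hvτ 0
      have hrecω := piS_rec hl0 hl1 ha hvω
      have hrecτ := piS_rec hl0 hl1 ha hvτ
      have hσω := piS_mem hl0 hl1 ha (shift_valid hvω)
      have hστ := piS_mem hl0 hl1 ha (shift_valid hvτ)
      have hstep : ∀ t, 1 ≤ t → t + 1 ≤ m → l - l ^ 2 ≤ a (t + 1) - a t := by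
        intro t h1 h2
        rcases ht.adj t h1 h2 with hgap | ⟨ℓ, hℓ, heq⟩
        · nlinarith [sq_nonneg l]
        · have hk2 := (hka ℓ hℓ).1
          have hpow : l ^ k ℓ ≤ l ^ 2 := pow_le_pow_of_le_one hl0.le hl1.le hk2
          linarith
      rcases Nat.lt_or_ge (τ 0) (ω 0 + 2) with hlt2 | hfar
      · -- adjacent : τ 0 = ω 0 + 1
        have hadj : τ 0 = ω 0 + 1 := by omega
        rcases ht.adj (ω 0) hi.1 (by omega) with hgap | ⟨ℓ, hℓ, heq⟩
        · -- gap case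
          have hmemg : g (ω 0) ∈ (Finset.Icc 1 (m - 1)).image g :=
            Finset.mem_image_of_mem g (Finset.mem_Icc.2 ⟨hi.1, by omega⟩)
          have h1 : c ≤ g (ω 0) := le_trans (min_le_right _ _) (Finset.min'_le _ _ hmemg)
          have h2 : g (ω 0) = a (ω 0 + 1) - a (ω 0) - l := by
            simp only [hg]; rw [if_pos hgap]
          rw [hrecω, hrecτ, hadj]
          have e2 : l * piS l a (fun j => τ (j + 1)) ≥ 0 :=
            mul_nonneg hl0.le hστ.1
          have e3 : l * piS l a (fun j => ω (j + 1)) ≤ l * 1 :=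
            mul_le_mul_of_nonneg_left hσω.2 hl0.le
          linarith
        · -- overlap case
          have hk2 := (hka ℓ hℓ).1
          have hkK := (hka ℓ hℓ).2
          have hγi : ω 0 ∈ gammaSet l m k a ℓ := ⟨Set.mem_Icc.2 ⟨hi.1, by omega⟩, heq⟩
          obtain ⟨s, hs, hs1⟩ := hcτ 0 ℓ (ω 0) hℓ hγi (by omega)
          have hsumστ : Summable (fun j => a (τ (j + 1)) * l ^ j) :=
            summable_code hl0 hl1 ha (shift_valid hvτ)
          have hterm : a 2 * l ^ (k ℓ - 2) ≤ a (τ (s + 1)) * l ^ s := by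
            have hvs := hvτ (s + 1)
            have hτs : 2 ≤ τ (s + 1) := by
              have h5 : τ (0 + 1 + s) ≠ 1 := hs1
              have h6 : 0 + 1 + s = s + 1 := by omega
              rw [h6] at h5
              have h7 := hvs.1
              omega
            have ham : a 2 ≤ a (τ (s + 1)) :=
              ht.mono.monotoneOn (Set.mem_Icc.2 ⟨by omega, by omega⟩)
                (Set.mem_Icc.2 ⟨hvs.1, hvs.2⟩) hτs
            have hpow : l ^ (k ℓ - 2) ≤ l ^ s :=
              pow_le_pow_of_le_one hl0.le hl1.le (by omega)
            have ha2 : 0 ≤ a 2 := (ha 2 (by omega) (by omega)).1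
            exact mul_le_mul ham hpow (by positivity) ((ha _ hvs.1 hvs.2).1)
          have hle : a (τ (s + 1)) * l ^ s ≤ piS l a (fun j => τ (j + 1)) := by
            exact Summable.le_tsum hsumστ s (fun q _ =>
              mul_nonneg ((ha _ (hvτ (q + 1)).1 (hvτ (q + 1)).2).1) (by positivity))
          have hpow1 : l * l ^ (k ℓ - 2) = l ^ (k ℓ - 1) := by
            rw [← pow_succ']; congr 1; omega
          have hpow2 : l * l ^ (k ℓ - 1) = l ^ k ℓ := by
            rw [← pow_succ']; congr 1; omega
          have hpow3 : l ^ (k 1 - 1) ≤ l ^ (k ℓ - 1) :=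
            pow_le_pow_of_le_one hl0.le hl1.le (by omega)
          have h1 : c ≤ l ^ (k 1 - 1) * (a 2 - l) :=
            le_trans (min_le_left _ _) (min_le_right _ _)
          have ha2l : 0 ≤ a 2 - l := by linarith [ht.a2]
          rw [hrecω, hrecτ, hadj]
          have haeq : a (ω 0 + 1) = a (ω 0) + l - l ^ k ℓ := by linarith
          rw [haeq]
          have e1 : l * (a 2 * l ^ (k ℓ - 2)) ≤ l * piS l a (fun j => τ (j + 1)) :=
            mul_le_mul_of_nonneg_left (le_trans hterm hle) hl0.le
          have e2 : l * piS l a (fun j => ω (j + 1)) ≤ l * 1 :=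
            mul_le_mul_of_nonneg_left hσω.2 hl0.le
          have e3 : l * (a 2 * l ^ (k ℓ - 2)) = a 2 * l ^ (k ℓ - 1) := by
            rw [← hpow1]; ring
          have e4 : l ^ (k ℓ - 1) * (a 2 - l) = a 2 * l ^ (k ℓ - 1) - l ^ k ℓ := by
            rw [← hpow2]; ring
          have e5 : l ^ (k 1 - 1) * (a 2 - l) ≤ l ^ (k ℓ - 1) * (a 2 - l) :=
            mul_le_mul_of_nonneg_right hpow3 ha2l
          linarith
      · -- far case : ω 0 + 2 ≤ τ 0
        have h2m : ω 0 + 2 ≤ m := le_trans hfar hj.2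
        have hs1 := hstep (ω 0) hi.1 (by omega)
        have hs2 := hstep (ω 0 + 1) (by omega) (by omega)
        have hmono : a (ω 0 + 2) ≤ a (τ 0) :=
          ht.mono.monotoneOn (Set.mem_Icc.2 ⟨by omega, h2m⟩)
            (Set.mem_Icc.2 ⟨hj.1, hj.2⟩) hfar
        have h1 : c ≤ l * (1 - 2 * l) := le_trans (min_le_left _ _) (min_le_left _ _)
        rw [hrecω, hrecτ]
        have e2 : l * piS l a (fun j => τ (j + 1)) ≥ 0 := mul_nonneg hl0.le hστ.1
        have e3 : l * piS l a (fun j => ω (j + 1)) ≤ l * 1 :=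
          mul_le_mul_of_nonneg_left hσω.2 hl0.le
        nlinarith
    intro ω τ hvω hvτ hcω hcτ hag hne0
    rcases lt_trichotomy (ω 0) (τ 0) with h | h | h
    · have hk := key ω τ hvω hvτ hcω hcτ h
      rw [abs_sub_comm]
      calc c * l ^ 0 = c := by ring
        _ ≤ piS l a τ - piS l a ω := hk
        _ ≤ |piS l a τ - piS l a ω| := le_abs_self _
    · exact absurd h hne0
    · have hk := key τ ω hvτ hvω hcτ hcω h
      calc c * l ^ 0 = c := by ring
        _ ≤ piS l a ω - piS l a τ := hk
        _ ≤ |piS l a ω - piS l a τ| := le_abs_self _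
  | succ p ih =>
    intro ω τ hvω hvτ hcω hcτ hag hnep
    have h0 : ω 0 = τ 0 := hag 0 (by omega)
    have hih := ih (fun j => ω (j + 1)) (fun j => τ (j + 1)) (shift_valid hvω)
      (shift_valid hvτ) (shift_canon hcω) (shift_canon hcτ)
      (fun q hq => hag (q + 1) (by omega)) hnep
    rw [piS_rec hl0 hl1 ha hvω, piS_rec hl0 hl1 ha hvτ, h0]
    have heq : a (τ 0) + l * piS l a (fun j => ω (j + 1)) -
        (a (τ 0) + l * piS l a (fun j => τ (j + 1))) =
        l * (piS l a (fun j => ω (j + 1)) - piS l a (fun j => τ (j + 1))) := by ring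
    rw [heq, abs_mul, abs_of_pos hl0]
    calc c * l ^ (p + 1) = l * (c * l ^ p) := by ring
      _ ≤ l * |piS l a (fun j => ω (j + 1)) - piS l a (fun j => τ (j + 1))| :=
          mul_le_mul_of_nonneg_left hih hl0.le

end Separation

section Perm

variable {l : ℝ} {m n : ℕ} {k : ℕ → ℕ} {a b : ℕ → ℝ}

lemma exists_perm (hl0 : 0 < l) (hl1 : l < 1) (hm : 3 ≤ m)
    (hkinj : ∀ ℓ ℓ', ℓ ∈ Set.Icc 1 n → ℓ' ∈ Set.Icc 1 n → k ℓ = k ℓ' → ℓ = ℓ')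
    (hγ : ∀ ℓ ∈ Set.Icc 1 n, (gammaSet l m k a ℓ).ncard = (gammaSet l m k b ℓ).ncard) :
    ∃ ρ ρ' : ℕ → ℕ,
      (∀ x, 1 ≤ x → x ≤ m → (1 ≤ ρ x ∧ ρ x ≤ m) ∧ ρ' (ρ x) = x) ∧
      (∀ x, 1 ≤ x → x ≤ m → (1 ≤ ρ' x ∧ ρ' x ≤ m) ∧ ρ (ρ' x) = x) ∧
      ρ 1 = 1 ∧
      (∀ ℓ i, ℓ ∈ Set.Icc 1 n → i ∈ gammaSet l m k a ℓ →
        ∃ i', i' ∈ gammaSet l m k b ℓ ∧ ρ (i + 1) = i' + 1) := by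
  classical
  set G : (ℕ → ℝ) → ℕ → Finset ℕ :=
    fun c ℓ => (Finset.Icc 1 (m - 1)).filter (fun i => c i + l - c (i + 1) = l ^ k ℓ) with hG
  have hGset : ∀ (c : ℕ → ℝ) ℓ, gammaSet l m k c ℓ = ↑(G c ℓ) := by
    intro c ℓ
    ext i
    simp only [gammaSet, Set.mem_setOf_eq, Set.mem_Icc, hG, Finset.coe_filter,
      Finset.mem_Icc]
  have hGmem : ∀ (c : ℕ → ℝ) ℓ i, i ∈ G c ℓ → 1 ≤ i ∧ i ≤ m - 1 := by
    intro c ℓ i hi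
    simp only [hG, Finset.mem_filter, Finset.mem_Icc] at hi
    exact hi.1
  have hcard : ∀ ℓ ∈ Finset.Icc 1 n, (G a ℓ).card = (G b ℓ).card := by
    intro ℓ hℓ
    have h2 := hγ ℓ (by simpa [Finset.mem_Icc, Set.mem_Icc] using hℓ)
    rwa [hGset a, hGset b, Set.ncard_coe_finset, Set.ncard_coe_finset] at h2
  have hdisj : ∀ (c : ℕ → ℝ) ℓ ℓ', ℓ ∈ Finset.Icc 1 n → ℓ' ∈ Finset.Icc 1 n → ℓ ≠ ℓ' →
      ∀ i, i ∈ G c ℓ → i ∉ G c ℓ' := by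
    intro c ℓ ℓ' hℓ hℓ' hne i hi hi'
    simp only [hG, Finset.mem_filter] at hi hi'
    have hpow : l ^ k ℓ = l ^ k ℓ' := by rw [← hi.2, hi'.2]
    have hkk : k ℓ = k ℓ' := pow_right_injective₀ hl0 (by linarith) hpow
    exact hne (hkinj ℓ ℓ' (by simpa [Set.mem_Icc, Finset.mem_Icc] using hℓ)
      (by simpa [Set.mem_Icc, Finset.mem_Icc] using hℓ') hkk)
  set TT : (ℕ → ℝ) → Finset ℕ :=
    fun c => (Finset.Icc 1 n).biUnion (fun ℓ => (G c ℓ).image (· + 1)) with hTT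
  have hTmem : ∀ (c : ℕ → ℝ) x, x ∈ TT c ↔ ∃ ℓ, ℓ ∈ Finset.Icc 1 n ∧ ∃ i ∈ G c ℓ, i + 1 = x := by
    intro c x
    simp [hTT, Finset.mem_biUnion, Finset.mem_image]
  have hT2m : ∀ (c : ℕ → ℝ) x, x ∈ TT c → 2 ≤ x ∧ x ≤ m := by
    intro c x hx
    obtain ⟨ℓ, hℓ, i, hi, rfl⟩ := (hTmem c x).1 hx
    have := hGmem c ℓ i hi
    omega
  have hTsub : ∀ c : ℕ → ℝ, TT c ⊆ Finset.Icc 2 m := by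
    intro c x hx
    exact Finset.mem_Icc.2 (hT2m c x hx)
  have hTcard : (TT a).card = (TT b).card := by
    rw [hTT]
    rw [Finset.card_biUnion, Finset.card_biUnion]
    · refine Finset.sum_congr rfl fun ℓ hℓ => ?_
      rw [Finset.card_image_of_injective _ (add_left_injective 1),
        Finset.card_image_of_injective _ (add_left_injective 1)]
      exact hcard ℓ hℓ
    · intro ℓ hℓ ℓ' hℓ' hne
      rw [Function.onFun, Finset.disjoint_left]
      intro x hx hx'
      obtain ⟨i, hi, hix⟩ := Finset.mem_image.1 hx
      obtain ⟨i', hi', hix'⟩ := Finset.mem_image.1 hx'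
      have : i = i' := by omega
      exact hdisj b ℓ ℓ' hℓ hℓ' hne i hi (this ▸ hi')
    · intro ℓ hℓ ℓ' hℓ' hne
      rw [Function.onFun, Finset.disjoint_left]
      intro x hx hx'
      obtain ⟨i, hi, hix⟩ := Finset.mem_image.1 hx
      obtain ⟨i', hi', hix'⟩ := Finset.mem_image.1 hx'
      have : i = i' := by omega
      exact hdisj a ℓ ℓ' hℓ hℓ' hne i hi (this ▸ hi')
  set Ra : Finset ℕ := Finset.Icc 2 m \ TT a with hRa
  set Rb : Finset ℕ := Finset.Icc 2 m \ TT b with hRb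
  have hRcard : Ra.card = Rb.card := by
    rw [hRa, hRb, Finset.card_sdiff_of_subset (hTsub a), Finset.card_sdiff_of_subset (hTsub b), hTcard]
  set lab : (ℕ → ℝ) → ℕ → ℕ := fun c x => sInf {ℓ | ℓ ∈ Finset.Icc 1 n ∧ x - 1 ∈ G c ℓ}
    with hlab
  have hlab_spec : ∀ (c : ℕ → ℝ) x, x ∈ TT c →
      lab c x ∈ Finset.Icc 1 n ∧ x - 1 ∈ G c (lab c x) := by
    intro c x hx
    obtain ⟨ℓ, hℓ, i, hi, hix⟩ := (hTmem c x).1 hx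
    have hi' : x - 1 = i := by omega
    exact Nat.sInf_mem (⟨ℓ, hℓ, hi' ▸ hi⟩ :
      {ℓ | ℓ ∈ Finset.Icc 1 n ∧ x - 1 ∈ G c ℓ}.Nonempty)
  have hlab_unique : ∀ (c : ℕ → ℝ) x ℓ, x ∈ TT c → ℓ ∈ Finset.Icc 1 n → x - 1 ∈ G c ℓ →
      lab c x = ℓ := by
    intro c x ℓ hx hℓ hmem
    obtain ⟨h1, h2⟩ := hlab_spec c x hx
    by_contra hne
    exact hdisj c (lab c x) ℓ h1 hℓ hne (x - 1) h2 hmem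
  set E : ℕ → ℕ → ℕ := fun ℓ i =>
    if h : ℓ ∈ Finset.Icc 1 n ∧ i ∈ G a ℓ then
      (Finset.equivOfCardEq (hcard ℓ h.1) ⟨i, h.2⟩ : ℕ) else i with hE
  set E' : ℕ → ℕ → ℕ := fun ℓ j =>
    if h : ℓ ∈ Finset.Icc 1 n ∧ j ∈ G b ℓ then
      ((Finset.equivOfCardEq (hcard ℓ h.1)).symm ⟨j, h.2⟩ : ℕ) else j with hE'
  have hEmem : ∀ ℓ i, ℓ ∈ Finset.Icc 1 n → i ∈ G a ℓ → E ℓ i ∈ G b ℓ := by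
    intro ℓ i hℓ hi
    simp only [hE]
    rw [dif_pos ⟨hℓ, hi⟩]
    exact (Finset.equivOfCardEq (hcard ℓ hℓ) ⟨i, hi⟩).2
  have hE'mem : ∀ ℓ j, ℓ ∈ Finset.Icc 1 n → j ∈ G b ℓ → E' ℓ j ∈ G a ℓ := by
    intro ℓ j hℓ hj
    simp only [hE']
    rw [dif_pos ⟨hℓ, hj⟩]
    exact ((Finset.equivOfCardEq (hcard ℓ hℓ)).symm ⟨j, hj⟩).2
  have hEval : ∀ ℓ i (hℓ : ℓ ∈ Finset.Icc 1 n) (hi : i ∈ G a ℓ),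
      E ℓ i = (Finset.equivOfCardEq (hcard ℓ hℓ) ⟨i, hi⟩ : ℕ) := by
    intro ℓ i hℓ hi
    simp only [hE]
    rw [dif_pos ⟨hℓ, hi⟩]
  have hE'val : ∀ ℓ j (hℓ : ℓ ∈ Finset.Icc 1 n) (hj : j ∈ G b ℓ),
      E' ℓ j = ((Finset.equivOfCardEq (hcard ℓ hℓ)).symm ⟨j, hj⟩ : ℕ) := by
    intro ℓ j hℓ hj
    simp only [hE']
    rw [dif_pos ⟨hℓ, hj⟩]
  have hEE' : ∀ ℓ i, ℓ ∈ Finset.Icc 1 n → i ∈ G a ℓ → E' ℓ (E ℓ i) = i := by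
    intro ℓ i hℓ hi
    have hmem := hEmem ℓ i hℓ hi
    rw [hEval ℓ i hℓ hi] at hmem ⊢
    rw [hE'val ℓ _ hℓ hmem]
    have h3 : (⟨(Finset.equivOfCardEq (hcard ℓ hℓ) ⟨i, hi⟩ : ℕ), hmem⟩ :
        {x // x ∈ G b ℓ}) = Finset.equivOfCardEq (hcard ℓ hℓ) ⟨i, hi⟩ := Subtype.ext rfl
    rw [h3, Equiv.symm_apply_apply]
  have hE'E : ∀ ℓ j, ℓ ∈ Finset.Icc 1 n → j ∈ G b ℓ → E ℓ (E' ℓ j) = j := by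
    intro ℓ j hℓ hj
    have hmem := hE'mem ℓ j hℓ hj
    rw [hE'val ℓ j hℓ hj] at hmem ⊢
    rw [hEval ℓ _ hℓ hmem]
    have h3 : (⟨((Finset.equivOfCardEq (hcard ℓ hℓ)).symm ⟨j, hj⟩ : ℕ), hmem⟩ :
        {x // x ∈ G a ℓ}) = (Finset.equivOfCardEq (hcard ℓ hℓ)).symm ⟨j, hj⟩ := Subtype.ext rfl
    rw [h3, Equiv.apply_symm_apply]
  set ER : ℕ → ℕ := fun x => if h : x ∈ Ra then (Finset.equivOfCardEq hRcard ⟨x, h⟩ : ℕ) else x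
    with hER
  set ER' : ℕ → ℕ := fun y => if h : y ∈ Rb then ((Finset.equivOfCardEq hRcard).symm ⟨y, h⟩ : ℕ)
    else y with hER'
  have hERmem : ∀ x, x ∈ Ra → ER x ∈ Rb := by
    intro x hx
    simp only [hER]; rw [dif_pos hx]
    exact (Finset.equivOfCardEq hRcard ⟨x, hx⟩).2
  have hER'mem : ∀ y, y ∈ Rb → ER' y ∈ Ra := by
    intro y hy
    simp only [hER']; rw [dif_pos hy]
    exact ((Finset.equivOfCardEq hRcard).symm ⟨y, hy⟩).2
  have hERval : ∀ x (hx : x ∈ Ra), ER x = (Finset.equivOfCardEq hRcard ⟨x, hx⟩ : ℕ) := by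
    intro x hx
    simp only [hER]
    rw [dif_pos hx]
  have hER'val : ∀ y (hy : y ∈ Rb), ER' y = ((Finset.equivOfCardEq hRcard).symm ⟨y, hy⟩ : ℕ) := by
    intro y hy
    simp only [hER']
    rw [dif_pos hy]
  have hERER' : ∀ x, x ∈ Ra → ER' (ER x) = x := by
    intro x hx
    have hmem := hERmem x hx
    rw [hERval x hx] at hmem ⊢
    rw [hER'val _ hmem]
    have h3 : (⟨(Finset.equivOfCardEq hRcard ⟨x, hx⟩ : ℕ), hmem⟩ : {z // z ∈ Rb})
        = Finset.equivOfCardEq hRcard ⟨x, hx⟩ := Subtype.ext rfl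
    rw [h3, Equiv.symm_apply_apply]
  have hER'ER : ∀ y, y ∈ Rb → ER (ER' y) = y := by
    intro y hy
    have hmem := hER'mem y hy
    rw [hER'val y hy] at hmem ⊢
    rw [hERval _ hmem]
    have h3 : (⟨((Finset.equivOfCardEq hRcard).symm ⟨y, hy⟩ : ℕ), hmem⟩ : {z // z ∈ Ra})
        = (Finset.equivOfCardEq hRcard).symm ⟨y, hy⟩ := Subtype.ext rfl
    rw [h3, Equiv.apply_symm_apply]
  set ρ : ℕ → ℕ := fun x => if x ∈ TT a then E (lab a x) (x - 1) + 1
    else if x ∈ Ra then ER x else x with hρ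
  set ρ' : ℕ → ℕ := fun y => if y ∈ TT b then E' (lab b y) (y - 1) + 1
    else if y ∈ Rb then ER' y else y with hρ'
  -- main forward property on TT a
  have hfwd : ∀ x, x ∈ TT a → ρ x ∈ TT b ∧ lab b (ρ x) = lab a x ∧
      ρ x - 1 = E (lab a x) (x - 1) ∧ ρ' (ρ x) = x := by
    intro x hx
    obtain ⟨hℓx, hmemx⟩ := hlab_spec a x hx
    have hρx : ρ x = E (lab a x) (x - 1) + 1 := by simp only [hρ]; rw [if_pos hx]
    have hmemb : E (lab a x) (x - 1) ∈ G b (lab a x) := hEmem _ _ hℓx hmemx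
    have hTb : ρ x ∈ TT b := by
      rw [hρx]
      exact (hTmem b _).2 ⟨lab a x, hℓx, E (lab a x) (x - 1), hmemb, rfl⟩
    have hsub : ρ x - 1 = E (lab a x) (x - 1) := by rw [hρx]; omega
    have hlabb : lab b (ρ x) = lab a x :=
      hlab_unique b (ρ x) (lab a x) hTb hℓx (hsub ▸ hmemb)
    refine ⟨hTb, hlabb, hsub, ?_⟩
    have hx2 := hT2m a x hx
    simp only [hρ']
    rw [if_pos hTb, hlabb, hsub, hEE' _ _ hℓx hmemx]
    omega
  have hbwd : ∀ y, y ∈ TT b → ρ' y ∈ TT a ∧ lab a (ρ' y) = lab b y ∧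
      ρ' y - 1 = E' (lab b y) (y - 1) ∧ ρ (ρ' y) = y := by
    intro y hy
    obtain ⟨hℓy, hmemy⟩ := hlab_spec b y hy
    have hρ'y : ρ' y = E' (lab b y) (y - 1) + 1 := by simp only [hρ']; rw [if_pos hy]
    have hmema : E' (lab b y) (y - 1) ∈ G a (lab b y) := hE'mem _ _ hℓy hmemy
    have hTa : ρ' y ∈ TT a := by
      rw [hρ'y]
      exact (hTmem a _).2 ⟨lab b y, hℓy, E' (lab b y) (y - 1), hmema, rfl⟩
    have hsub : ρ' y - 1 = E' (lab b y) (y - 1) := by rw [hρ'y]; omega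
    have hlaba : lab a (ρ' y) = lab b y :=
      hlab_unique a (ρ' y) (lab b y) hTa hℓy (hsub ▸ hmema)
    refine ⟨hTa, hlaba, hsub, ?_⟩
    have hy2 := hT2m b y hy
    simp only [hρ]
    rw [if_pos hTa, hlaba, hsub, hE'E _ _ hℓy hmemy]
    omega
  refine ⟨ρ, ρ', ?_, ?_, ?_, ?_⟩
  · -- forward inverse and bounds
    intro x h1x hxm
    by_cases hx : x ∈ TT a
    · obtain ⟨hTb, -, -, hinv⟩ := hfwd x hx
      have := hT2m b _ hTb
      exact ⟨⟨by omega, this.2⟩, hinv⟩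
    · by_cases hx2 : x ∈ Ra
      · have hρx : ρ x = ER x := by simp only [hρ]; rw [if_neg hx, if_pos hx2]
        have hmem := hERmem x hx2
        have hmem2 : ER x ∈ Finset.Icc 2 m := Finset.mem_sdiff.1 hmem |>.1
        have hnotT : ER x ∉ TT b := (Finset.mem_sdiff.1 hmem).2
        have hbounds := Finset.mem_Icc.1 hmem2
        refine ⟨⟨by rw [hρx]; omega, by rw [hρx]; exact hbounds.2⟩, ?_⟩
        rw [hρx]
        simp only [hρ']
        rw [if_neg hnotT, if_pos hmem]
        exact hERER' x hx2
      · have hx1 : x = 1 := by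
          by_contra hne1
          exact hx2 (Finset.mem_sdiff.2 ⟨Finset.mem_Icc.2 ⟨by omega, hxm⟩, hx⟩)
        subst hx1
        have hρ1 : ρ 1 = 1 := by
          simp only [hρ]; rw [if_neg hx, if_neg hx2]
        rw [hρ1]
        refine ⟨⟨le_refl 1, by omega⟩, ?_⟩
        have h1Tb : (1 : ℕ) ∉ TT b := fun h => by have := hT2m b 1 h; omega
        have h1Rb : (1 : ℕ) ∉ Rb := fun h => by
          have := Finset.mem_Icc.1 (Finset.mem_sdiff.1 h).1; omega
        simp only [hρ']
        rw [if_neg h1Tb, if_neg h1Rb]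
  · -- backward inverse and bounds
    intro y h1y hym
    by_cases hy : y ∈ TT b
    · obtain ⟨hTa, -, -, hinv⟩ := hbwd y hy
      have := hT2m a _ hTa
      exact ⟨⟨by omega, this.2⟩, hinv⟩
    · by_cases hy2 : y ∈ Rb
      · have hρ'y : ρ' y = ER' y := by simp only [hρ']; rw [if_neg hy, if_pos hy2]
        have hmem := hER'mem y hy2
        have hmem2 : ER' y ∈ Finset.Icc 2 m := Finset.mem_sdiff.1 hmem |>.1
        have hnotT : ER' y ∉ TT a := (Finset.mem_sdiff.1 hmem).2
        have hbounds := Finset.mem_Icc.1 hmem2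
        refine ⟨⟨by rw [hρ'y]; omega, by rw [hρ'y]; exact hbounds.2⟩, ?_⟩
        rw [hρ'y]
        simp only [hρ]
        rw [if_neg hnotT, if_pos hmem]
        exact hER'ER y hy2
      · have hy1 : y = 1 := by
          by_contra hne1
          exact hy2 (Finset.mem_sdiff.2 ⟨Finset.mem_Icc.2 ⟨by omega, hym⟩, hy⟩)
        subst hy1
        have hρ'1 : ρ' 1 = 1 := by
          simp only [hρ']; rw [if_neg hy, if_neg hy2]
        rw [hρ'1]
        refine ⟨⟨le_refl 1, by omega⟩, ?_⟩
        have h1Ta : (1 : ℕ) ∉ TT a := fun h => by have := hT2m a 1 h; omega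
        have h1Ra : (1 : ℕ) ∉ Ra := fun h => by
          have := Finset.mem_Icc.1 (Finset.mem_sdiff.1 h).1; omega
        simp only [hρ]
        rw [if_neg h1Ta, if_neg h1Ra]
  · -- ρ 1 = 1
    have h1Ta : (1 : ℕ) ∉ TT a := fun h => by have := hT2m a 1 h; omega
    have h1Ra : (1 : ℕ) ∉ Ra := fun h => by
      have := Finset.mem_Icc.1 (Finset.mem_sdiff.1 h).1; omega
    simp only [hρ]
    rw [if_neg h1Ta, if_neg h1Ra]
  · -- pattern transfer
    intro ℓ i hℓ hi
    have hiG : i ∈ G a ℓ := by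
      rw [hGset a] at hi
      exact hi
    have hℓF : ℓ ∈ Finset.Icc 1 n := by
      simpa [Finset.mem_Icc, Set.mem_Icc] using hℓ
    have hx : i + 1 ∈ TT a := (hTmem a _).2 ⟨ℓ, hℓF, i, hiG, rfl⟩
    have hlabx : lab a (i + 1) = ℓ := hlab_unique a (i + 1) ℓ hx hℓF (by simpa using hiG)
    have hρx : ρ (i + 1) = E ℓ i + 1 := by
      simp only [hρ]
      rw [if_pos hx, hlabx]
      norm_num
    refine ⟨E ℓ i, ?_, hρx⟩
    rw [hGset b]
    exact hEmem ℓ i hℓF hiG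

end Perm

section MainLemma

variable {l : ℝ} {m n : ℕ} {k : ℕ → ℕ} {a b : ℕ → ℝ} {Ka Kb : Set ℝ}

lemma main_le (hl0 : 0 < l) (hl1 : l < 1) (hm : 3 ≤ m)
    (hka : ∀ ℓ, ℓ ∈ Set.Icc 1 n → 2 ≤ k ℓ ∧ k ℓ ≤ k 1)
    (hkinj : ∀ ℓ ℓ', ℓ ∈ Set.Icc 1 n → ℓ' ∈ Set.Icc 1 n → k ℓ = k ℓ' → ℓ = ℓ')
    (hta : Tame l m n k a) (htb : Tame l m n k b)
    (hγ : ∀ ℓ ∈ Set.Icc 1 n, (gammaSet l m k a ℓ).ncard = (gammaSet l m k b ℓ).ncard)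
    (hKane : Ka.Nonempty) (hKac : IsCompact Ka)
    (hKa : Ka = ⋃ i ∈ Set.Icc 1 m, (fun x => l * x + a i) '' Ka)
    (hKbne : Kb.Nonempty) (hKbc : IsCompact Kb)
    (hKb : Kb = ⋃ i ∈ Set.Icc 1 m, (fun x => l * x + b i) '' Kb) :
    dimH Kb ≤ dimH Ka := by
  have haB := hta.bounds hm
  have hbB := htb.bounds hm
  obtain ⟨ρ, ρ', hρf, hρb, hρ1, hρpat⟩ := exists_perm hl0 hl1 hm hkinj hγ
  obtain ⟨c, hc0, hsep⟩ := separation hl0 hl1 hm hta hka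
  set H : ℝ → ℝ := fun x => piS l b (fun j => ρ (canon l m a x j)) with hH
  have hvρ : ∀ x, x ∈ Ka → Valid m (fun j => ρ (canon l m a x j)) := by
    intro x hx j
    have hv := canon_valid hl0 hl1 haB hKane hKac hKa hx j
    exact (hρf _ hv.1 hv.2).1
  have himg : Kb ⊆ H '' Ka := by
    intro y hy
    have hvτ : Valid m (canon l m b y) := canon_valid hl0 hl1 hbB hKbne hKbc hKb hy
    have hcτ : Canon l m n k b (canon l m b y) :=
      canon_canonical hl0 hl1 hm hbB htb.h1 htb.hmtop (fun ℓ hℓ => (hka ℓ hℓ).1)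
        hKbne hKbc hKb hy
    set τ : ℕ → ℕ := canon l m b y with hτ
    set ω : ℕ → ℕ := fun j => ρ' (τ j) with hω
    have hvω : Valid m ω := fun j => (hρb (τ j) (hvτ j).1 (hvτ j).2).1
    have hρω : ∀ j, ρ (ω j) = τ j := fun j => (hρb (τ j) (hvτ j).1 (hvτ j).2).2
    have hcω : Canon l m n k a ω := by
      intro p ℓ i hℓ hγi hp
      obtain ⟨i', hi', hρi⟩ := hρpat ℓ i hℓ hγi
      have hτp : τ p = i' + 1 := by
        rw [← hρω p, hp, hρi]
      obtain ⟨s, hs, hs1⟩ := hcτ p ℓ i' hℓ hi' hτp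
      refine ⟨s, hs, ?_⟩
      intro hcon
      apply hs1
      rw [← hρω (p + 1 + s), hcon, hρ1]
    set x := piS l a ω with hx
    have hxKa : x ∈ Ka := piS_mem_Ka hl0 hl1 haB hKane hKac hKa hvω
    refine ⟨x, hxKa, ?_⟩
    have h1 : Valid m (canon l m a x) := canon_valid hl0 hl1 haB hKane hKac hKa hxKa
    have h2 : piS l a (canon l m a x) = x := canon_code hl0 hl1 haB hKane hKac hKa hxKa
    have h3 : Canon l m n k a (canon l m a x) :=
      canon_canonical hl0 hl1 hm haB hta.h1 hta.hmtop (fun ℓ hℓ => (hka ℓ hℓ).1)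
        hKane hKac hKa hxKa
    have hcanx : canon l m a x = ω := by
      by_contra hne
      obtain ⟨p, hp⟩ : ∃ p, canon l m a x p ≠ ω p := Function.ne_iff.1 hne
      have hp0' : sInf {p | canon l m a x p ≠ ω p} ∈ {p | canon l m a x p ≠ ω p} :=
        Nat.sInf_mem (⟨p, hp⟩ : {p | canon l m a x p ≠ ω p}.Nonempty)
      have hp0 : canon l m a x (sInf {p | canon l m a x p ≠ ω p})
          ≠ ω (sInf {p | canon l m a x p ≠ ω p}) := hp0'
      have hagree : ∀ q, q < sInf {p | canon l m a x p ≠ ω p} →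
          canon l m a x q = ω q := by
        intro q hq
        by_contra hq'
        have := Nat.sInf_le (show q ∈ {p | canon l m a x p ≠ ω p} from hq')
        omega
      have hs2 := hsep _ (canon l m a x) ω h1 hvω h3 hcω hagree hp0
      rw [h2, ← hx] at hs2
      simp only [sub_self, abs_zero] at hs2
      nlinarith [pow_pos hl0 (sInf {p | canon l m a x p ≠ ω p})]
    show piS l b (fun j => ρ (canon l m a x j)) = y
    rw [hcanx]
    have hback : (fun j => ρ (ω j)) = τ := funext hρω
    rw [hback]
    exact canon_code hl0 hl1 hbB hKbne hKbc hKb hy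
  have hlip : LipschitzOnWith (Real.toNNReal c⁻¹) H Ka := by
    apply LipschitzOnWith.of_dist_le'
    intro x hx y hy
    by_cases hxy : canon l m a x = canon l m a y
    · have hxyeq : x = y := by
        rw [← canon_code hl0 hl1 haB hKane hKac hKa hx,
          ← canon_code hl0 hl1 haB hKane hKac hKa hy, hxy]
      rw [hxyeq]
      simp
    · obtain ⟨p, hp⟩ := Function.ne_iff.1 hxy
      have hp0' : sInf {p | canon l m a x p ≠ canon l m a y p}
          ∈ {p | canon l m a x p ≠ canon l m a y p} :=
        Nat.sInf_mem (⟨p, hp⟩ : {p | canon l m a x p ≠ canon l m a y p}.Nonempty)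
      have hp0 : canon l m a x (sInf {p | canon l m a x p ≠ canon l m a y p})
          ≠ canon l m a y (sInf {p | canon l m a x p ≠ canon l m a y p}) := hp0'
      have hagree : ∀ q, q < sInf {p | canon l m a x p ≠ canon l m a y p} →
          canon l m a x q = canon l m a y q := by
        intro q hq
        by_contra hq'
        have := Nat.sInf_le (show q ∈ {p | canon l m a x p ≠ canon l m a y p} from hq')
        omega
      have h1x : Valid m (canon l m a x) := canon_valid hl0 hl1 haB hKane hKac hKa hx
      have h1y : Valid m (canon l m a y) := canon_valid hl0 hl1 haB hKane hKac hKa hy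
      have h3x : Canon l m n k a (canon l m a x) :=
        canon_canonical hl0 hl1 hm haB hta.h1 hta.hmtop (fun ℓ hℓ => (hka ℓ hℓ).1)
          hKane hKac hKa hx
      have h3y : Canon l m n k a (canon l m a y) :=
        canon_canonical hl0 hl1 hm haB hta.h1 hta.hmtop (fun ℓ hℓ => (hka ℓ hℓ).1)
          hKane hKac hKa hy
      have hub : dist (H x) (H y) ≤ l ^ (sInf {p | canon l m a x p ≠ canon l m a y p}) := by
        rw [Real.dist_eq]
        exact piS_prefix hl0 hl1 hbB _ _ _ (hvρ x hx) (hvρ y hy)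
          (fun q hq => congrArg ρ (hagree q hq))
      have hlb : c * l ^ (sInf {p | canon l m a x p ≠ canon l m a y p}) ≤ dist x y := by
        have hs2 := hsep _ (canon l m a x) (canon l m a y) h1x h1y h3x h3y hagree hp0
        rwa [canon_code hl0 hl1 haB hKane hKac hKa hx,
          canon_code hl0 hl1 haB hKane hKac hKa hy, ← Real.dist_eq] at hs2
      have h9 := mul_le_mul_of_nonneg_left hlb (le_of_lt (inv_pos.2 hc0))
      rw [← mul_assoc, inv_mul_cancel₀ (ne_of_gt hc0), one_mul] at h9
      linarith [hub, h9]
  calc dimH Kb ≤ dimH (H '' Ka) := dimH_mono himg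
    _ ≤ dimH Ka := hlip.dimH_image_le

lemma main_eq (hl0 : 0 < l) (hl1 : l < 1) (hm : 3 ≤ m)
    (hka : ∀ ℓ, ℓ ∈ Set.Icc 1 n → 2 ≤ k ℓ ∧ k ℓ ≤ k 1)
    (hkinj : ∀ ℓ ℓ', ℓ ∈ Set.Icc 1 n → ℓ' ∈ Set.Icc 1 n → k ℓ = k ℓ' → ℓ = ℓ')
    (hta : Tame l m n k a) (htb : Tame l m n k b)
    (hγ : ∀ ℓ ∈ Set.Icc 1 n, (gammaSet l m k a ℓ).ncard = (gammaSet l m k b ℓ).ncard)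
    (hKane : Ka.Nonempty) (hKac : IsCompact Ka)
    (hKa : Ka = ⋃ i ∈ Set.Icc 1 m, (fun x => l * x + a i) '' Ka)
    (hKbne : Kb.Nonempty) (hKbc : IsCompact Kb)
    (hKb : Kb = ⋃ i ∈ Set.Icc 1 m, (fun x => l * x + b i) '' Kb) :
    dimH Ka = dimH Kb :=
  le_antisymm
    (main_le hl0 hl1 hm hka hkinj htb hta
      (fun ℓ hℓ => (hγ ℓ hℓ).symm) hKbne hKbc hKb hKane hKac hKa)
    (main_le hl0 hl1 hm hka hkinj hta htb hγ hKane hKac hKa hKbne hKbc hKb)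

end MainLemma

section Reflection

variable {l : ℝ} {m n : ℕ} {k : ℕ → ℕ} {a : ℕ → ℝ} {Ka : Set ℝ}

lemma interval_disjoint_gap {c d : ℝ} (hcd : c ≤ d)
    (h : Set.Icc c (c + l) ∩ Set.Icc d (d + l) = ∅) (hl0 : 0 < l) : c + l < d := by
  by_contra hcon
  push_neg at hcon
  have hmem : d ∈ Set.Icc c (c + l) ∩ Set.Icc d (d + l) :=
    ⟨⟨hcd, hcon⟩, le_refl d, by linarith⟩
  rw [h] at hmem
  exact hmem

lemma classA_adj (hl0 : 0 < l) (hm : 3 ≤ m) (hA : MemClassA l m n k a) :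
    ∀ i, 1 ≤ i → i + 1 ≤ m →
      l < a (i + 1) - a i ∨ ∃ ℓ, ℓ ∈ Set.Icc 1 n ∧ a i + l - a (i + 1) = l ^ k ℓ := by
  intro i h1 h2
  obtain ⟨⟨h1a, hma, hmono⟩, -, hpair, -⟩ := hA
  by_cases hemp : Set.Icc (a i) (a i + l) ∩ Set.Icc (a (i + 1)) (a (i + 1) + l) = ∅
  · left
    have hle : a i ≤ a (i + 1) :=
      le_of_lt (hmono (Set.mem_Icc.2 ⟨by omega, by omega⟩)
        (Set.mem_Icc.2 ⟨by omega, by omega⟩) (by omega))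
    have := interval_disjoint_gap hle hemp hl0
    linarith
  · right
    exact hpair i (i + 1) (Set.mem_Icc.2 ⟨by omega, by omega⟩)
      (Set.mem_Icc.2 ⟨by omega, by omega⟩) (by omega)
      (Set.nonempty_iff_ne_empty.2 hemp)

lemma classA_tame_or (hl0 : 0 < l) (hm : 3 ≤ m) (hA : MemClassA l m n k a) :
    Tame l m n k a ∨ Tame l m n k (fun i => 1 - l - a (m + 1 - i)) := by
  have hadj := classA_adj hl0 hm hA
  obtain ⟨⟨h1a, hma, hmono⟩, htriple, hpair, hIII⟩ := hA
  rcases hIII with hfirst | hsecond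
  · left
    refine ⟨h1a, hma, hmono, hadj, ?_⟩
    have h2 := hfirst 2 (by omega) (by omega)
    have hle : a 1 ≤ a 2 :=
      le_of_lt (hmono (Set.mem_Icc.2 ⟨by omega, by omega⟩)
        (Set.mem_Icc.2 ⟨by omega, by omega⟩) (by omega))
    have := interval_disjoint_gap hle h2 hl0
    rw [h1a] at this
    linarith
  · right
    refine ⟨?_, ?_, ?_, ?_, ?_⟩
    · show 1 - l - a (m + 1 - 1) = 0
      rw [(by omega : m + 1 - 1 = m), hma]
      ring
    · show 1 - l - a (m + 1 - m) = 1 - l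
      rw [(by omega : m + 1 - m = 1), h1a]
      ring
    · intro x hx y hy hxy
      rw [Set.mem_Icc] at hx hy
      have := hmono (Set.mem_Icc.2 (⟨by omega, by omega⟩ : 1 ≤ m + 1 - y ∧ m + 1 - y ≤ m))
        (Set.mem_Icc.2 (⟨by omega, by omega⟩ : 1 ≤ m + 1 - x ∧ m + 1 - x ≤ m)) (by omega)
      show 1 - l - a (m + 1 - x) < 1 - l - a (m + 1 - y)
      linarith
    · intro i h1 h2
      have e1 : m + 1 - (i + 1) = m - i := by omega
      have e2 : m + 1 - i = (m - i) + 1 := by omega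
      rcases hadj (m - i) (by omega) (by omega) with hgap | ⟨ℓ, hℓ, heq⟩
      · left
        show l < (1 - l - a (m + 1 - (i + 1))) - (1 - l - a (m + 1 - i))
        rw [e1, e2]
        linarith
      · right
        refine ⟨ℓ, hℓ, ?_⟩
        show (1 - l - a (m + 1 - i)) + l - (1 - l - a (m + 1 - (i + 1))) = l ^ k ℓ
        rw [e1, e2]
        linarith
    · have h2 := hsecond (m - 1) (by omega) (by omega)
      rw [Set.inter_comm] at h2
      have hle : a (m - 1) ≤ a m :=
        le_of_lt (hmono (Set.mem_Icc.2 ⟨by omega, by omega⟩)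
          (Set.mem_Icc.2 ⟨by omega, by omega⟩) (by omega))
      have h3 := interval_disjoint_gap hle h2 hl0
      show l < 1 - l - a (m + 1 - 2)
      rw [(by omega : m + 1 - 2 = m - 1)]
      rw [hma] at h3
      linarith

lemma K_reflect (hm : 3 ≤ m)
    (hKa : Ka = ⋃ i ∈ Set.Icc 1 m, (fun x => l * x + a i) '' Ka) :
    (fun x => 1 - x) '' Ka
      = ⋃ i ∈ Set.Icc 1 m,
        (fun x => l * x + (fun i => 1 - l - a (m + 1 - i)) i) '' ((fun x => 1 - x) '' Ka) := by
  ext z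
  simp only [Set.mem_iUnion, Set.mem_image, Set.mem_Icc]
  constructor
  · rintro ⟨w, hw, rfl⟩
    rw [hKa] at hw
    simp only [Set.mem_iUnion, Set.mem_image, Set.mem_Icc] at hw
    obtain ⟨i, hi, v, hv, rfl⟩ := hw
    refine ⟨m + 1 - i, ⟨by omega, by omega⟩, 1 - v, ⟨v, hv, rfl⟩, ?_⟩
    show l * (1 - v) + (1 - l - a (m + 1 - (m + 1 - i))) = 1 - (l * v + a i)
    rw [(by omega : m + 1 - (m + 1 - i) = i)]
    ring
  · rintro ⟨i, hi, w, ⟨v, hv, rfl⟩, rfl⟩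
    refine ⟨l * v + a (m + 1 - i), map_mem_Ka hKa (by omega) (by omega) hv, ?_⟩
    show 1 - (l * v + a (m + 1 - i)) = l * (1 - v) + (1 - l - a (m + 1 - i))
    ring

lemma gamma_reflect_card (hm : 3 ≤ m) (ℓ : ℕ) :
    (gammaSet l m k (fun i => 1 - l - a (m + 1 - i)) ℓ).ncard
      = (gammaSet l m k a ℓ).ncard := by
  have hset : gammaSet l m k (fun i => 1 - l - a (m + 1 - i)) ℓ
      = (fun i => m - i) '' gammaSet l m k a ℓ := by
    ext i
    simp only [gammaSet, Set.mem_setOf_eq, Set.mem_Icc, Set.mem_image]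
    constructor
    · rintro ⟨⟨h1, h2⟩, heq⟩
      refine ⟨m - i, ⟨⟨by omega, by omega⟩, ?_⟩, by omega⟩
      have e1 : m + 1 - i = (m - i) + 1 := by omega
      have e2 : m + 1 - (i + 1) = m - i := by omega
      rw [e1, e2] at heq
      linarith
    · rintro ⟨j, ⟨⟨hj1, hj2⟩, heqj⟩, rfl⟩
      have e1 : m + 1 - (m - j) = j + 1 := by omega
      have e2 : m + 1 - (m - j + 1) = j := by omega
      refine ⟨⟨by omega, by omega⟩, ?_⟩
      show (1 - l - a (m + 1 - (m - j))) + l - (1 - l - a (m + 1 - (m - j + 1))) = l ^ k ℓ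
      rw [e1, e2]
      linarith
  rw [hset]
  apply Set.ncard_image_of_injOn
  intro x hx y hy hxy
  simp only [gammaSet, Set.mem_setOf_eq, Set.mem_Icc] at hx hy
  obtain ⟨⟨hx1, hx2⟩, -⟩ := hx
  obtain ⟨⟨hy1, hy2⟩, -⟩ := hy
  have hxy' : m - x = m - y := hxy
  omega

lemma dimH_reflect (K : Set ℝ) : dimH ((fun x => (1 : ℝ) - x) '' K) = dimH K := by
  have hiso : Isometry (fun x : ℝ => 1 - x) := by
    apply Isometry.of_dist_eq
    intro x y
    rw [Real.dist_eq, Real.dist_eq]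
    rw [show (1 : ℝ) - x - (1 - y) = -(x - y) by ring, abs_neg]
  exact hiso.dimH_image K

end Reflection







end

end DimHCorAux

theorem dimH_corollary
    (l : ℝ) (hl : 0 < l ∧ l < 1) (m n : ℕ) (hm : 3 ≤ m) (hn : 1 ≤ n)
    (k : ℕ → ℕ) (hkanti : StrictAntiOn k (Set.Icc 1 n)) (hk2 : 2 ≤ k n)
    (a b : ℕ → ℝ) (haA : MemClassA l m n k a) (hbA : MemClassA l m n k b)
    (hγ : ∀ ℓ ∈ Set.Icc 1 n,
      (gammaSet l m k a ℓ).ncard = (gammaSet l m k b ℓ).ncard)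
    (Ka Kb : Set ℝ)
    (hKane : Ka.Nonempty) (hKac : IsCompact Ka)
    (hKa : Ka = ⋃ i ∈ Set.Icc 1 m, (fun x => l * x + a i) '' Ka)
    (hKbne : Kb.Nonempty) (hKbc : IsCompact Kb)
    (hKb : Kb = ⋃ i ∈ Set.Icc 1 m, (fun x => l * x + b i) '' Kb) :
    dimH Ka = dimH Kb := by
  obtain ⟨hl0, hl1⟩ := hl
  have hka : ∀ ℓ, ℓ ∈ Set.Icc 1 n → 2 ≤ k ℓ ∧ k ℓ ≤ k 1 := by
    intro ℓ hℓ
    rw [Set.mem_Icc] at hℓ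
    constructor
    · rcases eq_or_lt_of_le hℓ.2 with he | hlt
      · rw [he]; exact hk2
      · have := hkanti (Set.mem_Icc.2 ⟨hℓ.1, hℓ.2⟩) (Set.mem_Icc.2 ⟨hn, le_refl n⟩) hlt
        omega
    · rcases eq_or_lt_of_le hℓ.1 with he | hlt
      · rw [← he]
      · have := hkanti (Set.mem_Icc.2 ⟨le_refl 1, hn⟩) (Set.mem_Icc.2 ⟨hℓ.1, hℓ.2⟩) hlt
        omega
  have hkinj : ∀ ℓ ℓ', ℓ ∈ Set.Icc 1 n → ℓ' ∈ Set.Icc 1 n → k ℓ = k ℓ' → ℓ = ℓ' :=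
    fun ℓ ℓ' h h' he => hkanti.injOn h h' he
  have hco : Continuous (fun x : ℝ => 1 - x) := continuous_const.sub continuous_id
  rcases DimHCorAux.classA_tame_or hl0 hm haA with hta | hta <;>
    rcases DimHCorAux.classA_tame_or hl0 hm hbA with htb | htb
  · exact DimHCorAux.main_eq hl0 hl1 hm hka hkinj hta htb hγ
      hKane hKac hKa hKbne hKbc hKb
  · -- b reflected
    have hKb' := DimHCorAux.K_reflect hm hKb
    have hγ' : ∀ ℓ ∈ Set.Icc 1 n, (gammaSet l m k a ℓ).ncard
        = (gammaSet l m k (fun i => 1 - l - b (m + 1 - i)) ℓ).ncard := by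
      intro ℓ hℓ
      rw [DimHCorAux.gamma_reflect_card hm ℓ]
      exact hγ ℓ hℓ
    have h1 := DimHCorAux.main_eq hl0 hl1 hm hka hkinj hta htb hγ'
      hKane hKac hKa (hKbne.image _) (hKbc.image hco) hKb'
    rw [h1]
    exact DimHCorAux.dimH_reflect Kb
  · -- a reflected
    have hKa' := DimHCorAux.K_reflect hm hKa
    have hγ' : ∀ ℓ ∈ Set.Icc 1 n, (gammaSet l m k (fun i => 1 - l - a (m + 1 - i)) ℓ).ncard
        = (gammaSet l m k b ℓ).ncard := by
      intro ℓ hℓ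
      rw [DimHCorAux.gamma_reflect_card hm ℓ]
      exact hγ ℓ hℓ
    have h1 := DimHCorAux.main_eq hl0 hl1 hm hka hkinj hta htb hγ'
      (hKane.image _) (hKac.image hco) hKa' hKbne hKbc hKb
    rw [← DimHCorAux.dimH_reflect Ka]
    exact h1
  · -- both reflected
    have hKa' := DimHCorAux.K_reflect hm hKa
    have hKb' := DimHCorAux.K_reflect hm hKb
    have hγ' : ∀ ℓ ∈ Set.Icc 1 n, (gammaSet l m k (fun i => 1 - l - a (m + 1 - i)) ℓ).ncard
        = (gammaSet l m k (fun i => 1 - l - b (m + 1 - i)) ℓ).ncard := by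
      intro ℓ hℓ
      rw [DimHCorAux.gamma_reflect_card hm ℓ, DimHCorAux.gamma_reflect_card hm ℓ]
      exact hγ ℓ hℓ
    have h1 := DimHCorAux.main_eq hl0 hl1 hm hka hkinj hta htb hγ'
      (hKane.image _) (hKac.image hco) hKa' (hKbne.image _) (hKbc.image hco) hKb'
    rw [← DimHCorAux.dimH_reflect Ka, ← DimHCorAux.dimH_reflect Kb]
    exact h1
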